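/- Let β ∈ [0,2], ρ ∈ (-2-β, 0), and M ∈ 𝔐^β on ℝ^d. Let σ ≠ 0 be a finite Borel measure on the unit sphere S^{d-1} and ℓ a function slowly varying at infinity. If for every Borel set D ⊆ S^{d-1} with σ(∂D) = 0, M(|x| > t, x/|x| ∈ D) ~ σ(D) t^{-(ρ+2+β)} ℓ(1/t) as t ↓ 0, then for every such D, M^β(|x| > t, x/|x| ∈ D) ~ ((ρ+2+β)/|ρ|) σ(D) t^ρ ℓ(t) as t → ∞. -/

import Mathlib

open MeasureTheory ENNReal Filter Topology Set

noncomputable section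

abbrev Rd (d : ℕ) := EuclideanSpace ℝ (Fin d)

/-- The spherical inversion map `x ↦ x / |x|²` (sending `0` to `0`). -/
def sphInv {d : ℕ} (x : Rd d) : Rd d := (‖x‖ ^ 2)⁻¹ • x

/-- The β-inversion of a measure `M`:
`M^β(A) = ∫ 1_A(x/|x|²) |x|^{2+β} M(dx)`. -/
def betaInv {d : ℕ} (β : ℝ) (M : Measure (Rd d)) : Measure (Rd d) :=
  Measure.map sphInv (M.withDensity fun x => ENNReal.ofReal (‖x‖ ^ (2 + β)))

/-- `M ∈ 𝔐^β`: `M({0}) = 0` and `∫ (|x|² ∧ |x|^β) M(dx) < ∞`. -/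
def MemM {d : ℕ} (β : ℝ) (M : Measure (Rd d)) : Prop :=
  M {0} = 0 ∧ ∫⁻ x, ENNReal.ofReal (min (‖x‖ ^ (2 : ℝ)) (‖x‖ ^ β)) ∂M < ⊤

/-- The set `{x : |x| > t, x/|x| ∈ D}` for a set `D` of directions on the unit sphere. -/
def cone {d : ℕ} (D : Set (Metric.sphere (0 : Rd d) 1)) (t : ℝ) : Set (Rd d) :=
  {x | t < ‖x‖ ∧ ∃ h : ‖x‖⁻¹ • x ∈ Metric.sphere (0 : Rd d) 1,
      (⟨‖x‖⁻¹ • x, h⟩ : Metric.sphere (0 : Rd d) 1) ∈ D}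


/-- Squeeze with a parameter `lam → 1⁻`. -/
lemma squeeze_param {l : Filter ℝ} [l.NeBot] {f : ℝ → ℝ} {T : ℝ} {A B : ℝ → ℝ}
    {g h : ℝ → ℝ → ℝ}
    (hs : ∀ lam ∈ Set.Ioo (0:ℝ) 1,
      (∀ᶠ c in l, g lam c ≤ f c ∧ f c ≤ h lam c) ∧
      Tendsto (g lam) l (𝓝 (A lam)) ∧ Tendsto (h lam) l (𝓝 (B lam)))
    (hA : Tendsto A (𝓝[<] (1:ℝ)) (𝓝 T)) (hB : Tendsto B (𝓝[<] (1:ℝ)) (𝓝 T)) :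
    Tendsto f l (𝓝 T) := by
  rw [Metric.tendsto_nhds]
  intro ε hε
  have hmem : Set.Ioo (0:ℝ) 1 ∈ 𝓝[<] (1:ℝ) :=
    Ioo_mem_nhdsLT_of_mem (by constructor <;> norm_num)
  have hAe := (Metric.tendsto_nhds.mp hA) (ε/2) (by linarith)
  have hBe := (Metric.tendsto_nhds.mp hB) (ε/2) (by linarith)
  obtain ⟨lam, hlam, hAl, hBl⟩ := (eventually_mem_set.mpr hmem).and (hAe.and hBe) |>.exists
  obtain ⟨hev, hg, hh⟩ := hs lam hlam
  have hg' := (Metric.tendsto_nhds.mp hg) (ε/2) (by linarith)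
  have hh' := (Metric.tendsto_nhds.mp hh) (ε/2) (by linarith)
  filter_upwards [hev, hg', hh'] with c hc hgc hhc
  rw [Real.dist_eq] at hAl hBl hgc hhc ⊢
  rw [abs_lt] at hAl hBl hgc hhc ⊢
  constructor <;> [nlinarith [hc.1]; nlinarith [hc.2]]

/-- slope limit for rpow at 1, from the left. -/
lemma rpow_slope (q : ℝ) :
    Tendsto (fun lam : ℝ => (lam ^ q - 1) / (lam - 1)) (𝓝[<] (1:ℝ)) (𝓝 q) := by
  have hd : HasDerivAt (fun x : ℝ => x ^ q) q 1 := by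
    have := Real.hasDerivAt_rpow_const (x := (1:ℝ)) (p := q) (Or.inl one_ne_zero)
    simpa using this
  have := hasDerivAt_iff_tendsto_slope.mp hd
  have h2 : Tendsto (slope (fun x : ℝ => x ^ q) 1) (𝓝[<] (1:ℝ)) (𝓝 q) :=
    this.mono_left (nhdsWithin_mono 1 (fun x hx => ne_of_lt hx))
  refine h2.congr (fun lam => ?_)
  rw [slope_def_field]
  simp [Real.one_rpow]

lemma tendsto_Bv {L a b : ℝ} (ha : 0 < a) (hb : 0 < b) :
    Tendsto (fun lam : ℝ => L * ((lam ^ (-a) - 1) / (1 - lam ^ b))) (𝓝[<] (1:ℝ))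
      (𝓝 (L * (a / b))) := by
  have h1 := rpow_slope (-a)
  have h2 := rpow_slope b
  have h3 : Tendsto (fun lam : ℝ => -(((lam ^ (-a) - 1) / (lam - 1)) / ((lam ^ b - 1) / (lam - 1))))
      (𝓝[<] (1:ℝ)) (𝓝 (a / b)) := by
    have := (h1.div h2 (ne_of_gt hb)).neg
    simpa [neg_div] using this
  have heq : ∀ᶠ lam in 𝓝[<] (1:ℝ),
      -(((lam ^ (-a) - 1) / (lam - 1)) / ((lam ^ b - 1) / (lam - 1)))
        = (lam ^ (-a) - 1) / (1 - lam ^ b) := by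
    filter_upwards [eventually_mem_set.mpr (Ioo_mem_nhdsLT_of_mem
      (show (1:ℝ) ∈ Set.Ioc (0:ℝ) 1 by constructor <;> norm_num))] with lam hlam
    have h4 : lam - 1 ≠ 0 := by nlinarith [hlam.2]
    have h5 : lam ^ b - 1 ≠ 0 := by
      have : lam ^ b < 1 := Real.rpow_lt_one (le_of_lt hlam.1) hlam.2 hb
      nlinarith
    have h6 : ((lam ^ (-a) - 1) / (lam - 1)) / ((lam ^ b - 1) / (lam - 1))
        = (lam ^ (-a) - 1) / (lam ^ b - 1) := by
      field_simp
    rw [h6, ← neg_sub (lam ^ b) (1:ℝ), div_neg]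
  exact (tendsto_const_nhds.mul (h3.congr' heq))

lemma tendsto_mul_nhdsGT {a : ℝ} (ha : 0 < a) :
    Tendsto (fun c : ℝ => a * c) (𝓝[>] (0:ℝ)) (𝓝[>] (0:ℝ)) := by
  apply tendsto_nhdsWithin_of_tendsto_nhds_of_eventually_within
  · have : Tendsto (fun c : ℝ => a * c) (𝓝 (0:ℝ)) (𝓝 (a * 0)) :=
      (tendsto_const_nhds.mul tendsto_id)
    simpa using this.mono_left nhdsWithin_le_nhds
  · filter_upwards [self_mem_nhdsWithin] with c hc
    exact mul_pos ha hc

lemma tendsto_scale {ℒ φ : ℝ → ℝ} {L a : ℝ} (ha : 0 < a)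
    (hLpos : ∀ s : ℝ, 0 < s → 0 < ℒ s)
    (hsv : Tendsto (fun c => ℒ (a * c) / ℒ c) (𝓝[>] (0:ℝ)) (𝓝 1))
    {al : ℝ}
    (hφ : Tendsto (fun s => φ s * s ^ al / ℒ s) (𝓝[>] (0:ℝ)) (𝓝 L)) :
    Tendsto (fun s => φ (a * s) * s ^ al / ℒ s) (𝓝[>] (0:ℝ)) (𝓝 (L * a ^ (-al))) := by
  have h1 : Tendsto (fun s => φ (a * s) * (a * s) ^ al / ℒ (a * s)) (𝓝[>] (0:ℝ)) (𝓝 L) :=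
    hφ.comp (tendsto_mul_nhdsGT ha)
  have h2 := (h1.mul hsv).mul (tendsto_const_nhds (x := a ^ (-al)))
  rw [mul_one] at h2
  refine h2.congr' ?_
  filter_upwards [self_mem_nhdsWithin] with s hs
  have hs0 : (0:ℝ) < s := hs
  have hL1 : ℒ (a*s) ≠ 0 := ne_of_gt (hLpos _ (mul_pos ha hs0))
  have hL2 : ℒ s ≠ 0 := ne_of_gt (hLpos _ hs0)
  have hmul : (a * s) ^ al = a ^ al * s ^ al := Real.mul_rpow ha.le hs0.le
  have hneg : a ^ (-al) = (a ^ al)⁻¹ := Real.rpow_neg ha.le al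
  have hane : a ^ al ≠ 0 := ne_of_gt (Real.rpow_pos_of_pos ha al)
  field_simp [hmul, hneg]
  rw [hmul, hneg, mul_comm (a ^ al), ← mul_assoc, mul_inv_cancel_right₀ hane]

lemma pow_rpow_comm {x : ℝ} (hx : 0 ≤ x) (q : ℝ) (k : ℕ) :
    ((x ^ k : ℝ)) ^ q = (x ^ q) ^ k := by
  rw [← Real.rpow_natCast x k, ← Real.rpow_mul hx, mul_comm, Real.rpow_mul hx,
    Real.rpow_natCast]

section
variable {Ω : Type*} [MeasurableSpace Ω]

set_option maxHeartbeats 2000000 in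
lemma core (μ μu : Measure Ω) (nrm : Ω → ℝ) (hnrm : Measurable nrm)
    (ℒ : ℝ → ℝ) (hLpos : ∀ s : ℝ, 0 < s → 0 < ℒ s)
    (hsv : ∀ a : ℝ, 0 < a → Tendsto (fun c => ℒ (a * c) / ℒ c) (𝓝[>] (0:ℝ)) (𝓝 1))
    (p al L Lu : ℝ) (hal : 0 < al) (halp : al < p) (hLu : 0 < Lu)
    (hle : μ ≤ μu)
    (hfin : ∀ s : ℝ, 0 < s → μu {ω | s ≤ nrm ω} < ⊤)
    (hm : Tendsto (fun s => (μ {ω | s ≤ nrm ω}).toReal * s ^ al / ℒ s) (𝓝[>] (0:ℝ)) (𝓝 L))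
    (hmu : Tendsto (fun s => (μu {ω | s ≤ nrm ω}).toReal * s ^ al / ℒ s) (𝓝[>] (0:ℝ)) (𝓝 Lu)) :
    Tendsto (fun c => (∫⁻ ω in {ω | 0 < nrm ω ∧ nrm ω < c}, ENNReal.ofReal (nrm ω ^ p) ∂μ).toReal
        / (c ^ (p - al) * ℒ c)) (𝓝[>] (0:ℝ)) (𝓝 (L * (al / (p - al)))) := by
  set γ : ℝ := p - al with hγdef
  have hγ0 : 0 < γ := by simp [hγdef]; linarith
  have hp0 : 0 < p := lt_trans hal halp
  set m : ℝ → ℝ := fun s => (μ {ω | s ≤ nrm ω}).toReal with hmdef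
  set mu : ℝ → ℝ := fun s => (μu {ω | s ≤ nrm ω}).toReal with hmudef
  have hsub : ∀ {s t : ℝ}, s ≤ t → {ω | t ≤ nrm ω} ⊆ {ω | s ≤ nrm ω} :=
    fun hst ω hω => le_trans hst hω
  have hfin' : ∀ s : ℝ, 0 < s → μ {ω | s ≤ nrm ω} < ⊤ :=
    fun s hs => lt_of_le_of_lt (hle _) (hfin s hs)
  have hmanti : ∀ {s t : ℝ}, 0 < s → s ≤ t → m t ≤ m s :=
    fun hs hst => ENNReal.toReal_mono (hfin' _ hs).ne (measure_mono (hsub hst))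
  have hmnn : ∀ s, 0 ≤ m s := fun s => ENNReal.toReal_nonneg
  have hmmu : ∀ {s : ℝ}, 0 < s → m s ≤ mu s :=
    fun hs => ENNReal.toReal_mono (hfin _ hs).ne (hle _)
  -- the upper-sum function
  set U : ℝ → ℝ → ℝ := fun lam c => ∑' k : ℕ,
      (lam ^ k * c) ^ p * (m (lam ^ (k+1) * c) - m (lam ^ k * c)) / (c ^ γ * ℒ c) with hUdef
  apply squeeze_param (g := fun lam c => lam ^ p * U lam c) (h := fun lam c => U lam c)
    (A := fun lam => lam ^ p * (L * ((lam ^ (-al) - 1) / (1 - lam ^ γ))))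
    (B := fun lam => L * ((lam ^ (-al) - 1) / (1 - lam ^ γ)))
  · intro lam hlam
    obtain ⟨hq0, hq1⟩ := hlam
    have hqk : ∀ k : ℕ, (0:ℝ) < lam ^ k := fun k => pow_pos hq0 k
    set K : ℝ := lam ^ (-(al + γ/2)) with hKdef
    have hK0 : 0 < K := Real.rpow_pos_of_pos hq0 _
    have hKgt : lam ^ (-al) < K := Real.rpow_lt_rpow_of_exponent_gt hq0 hq1 (by linarith)
    have hqeq : lam ^ p * K = lam ^ (γ/2) := by
      rw [hKdef, ← Real.rpow_add hq0]; congr 1; rw [hγdef]; ring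
    have hqlt : lam ^ p * K < 1 := by
      rw [hqeq]; exact Real.rpow_lt_one hq0.le hq1 (by linarith)
    have hqnn : (0:ℝ) ≤ lam ^ p * K := by positivity
    have hdec : ∀ (k : ℕ) (x : ℝ), 0 < x → lam ^ (k+1) * x ≤ lam ^ k * x := by
      intro k x hx
      rw [pow_succ]
      nlinarith [mul_pos (mul_pos (hqk k) hx) (sub_pos.mpr hq1)]
    -- eventual positivity of mu
    have hmup : ∀ᶠ c in 𝓝[>] (0:ℝ), 0 < mu c := by
      filter_upwards [hmu.eventually (eventually_gt_nhds (half_lt_self hLu)),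
        self_mem_nhdsWithin] with c h1 h2
      have hc0 : (0:ℝ) < c := h2
      by_contra hcon
      push_neg at hcon
      have hxal : (0:ℝ) < c ^ al := Real.rpow_pos_of_pos hc0 al
      have hLc : (0:ℝ) < ℒ c := hLpos c hc0
      have : mu c * c ^ al / ℒ c ≤ 0 :=
        div_nonpos_of_nonpos_of_nonneg (mul_nonpos_of_nonpos_of_nonneg hcon hxal.le) hLc.le
      linarith [half_pos hLu]
    -- ratio limit
    have hnum := tendsto_scale hq0 hLpos (hsv lam hq0) hmu
    have hrat : Tendsto (fun c => mu (lam * c) / mu c) (𝓝[>] (0:ℝ)) (𝓝 (lam ^ (-al))) := by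
      have hdiv := hnum.div hmu (ne_of_gt hLu)
      have heq : (Lu * lam ^ (-al)) / Lu = lam ^ (-al) := by
        field_simp
      rw [heq] at hdiv
      refine hdiv.congr' ?_
      filter_upwards [hmup, self_mem_nhdsWithin] with c hmc hc0'
      have hc0 : (0:ℝ) < c := hc0'
      have h1 : c ^ al ≠ 0 := ne_of_gt (Real.rpow_pos_of_pos hc0 al)
      have h2 : ℒ c ≠ 0 := ne_of_gt (hLpos c hc0)
      have h3 : mu c ≠ 0 := ne_of_gt hmc
      show mu (lam * c) * c ^ al / ℒ c / (mu c * c ^ al / ℒ c) = mu (lam * c) / mu c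
      rw [mul_div_assoc (mu (lam * c)) (c ^ al), mul_div_assoc (mu c) (c ^ al), mul_div_mul_right _ _ (div_ne_zero h1 h2)]
    have hstep : ∀ᶠ c in 𝓝[>] (0:ℝ),
        mu (lam * c) ≤ K * mu c ∧ 0 < mu c ∧ mu c * c ^ al / ℒ c ≤ 2*Lu := by
      filter_upwards [hrat.eventually (eventually_lt_nhds hKgt), hmup,
        hmu.eventually (eventually_lt_nhds (by linarith : Lu < 2*Lu))] with c h1 h2 h3
      exact ⟨((div_lt_iff₀ h2).mp h1).le, h2, h3.le⟩
    obtain ⟨c₁, hc₁, hgood'⟩ := mem_nhdsGT_iff_exists_Ioo_subset.mp hstep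
    have hc₁0 : (0:ℝ) < c₁ := hc₁
    have hPot : ∀ c ∈ Ioo (0:ℝ) c₁, ∀ k : ℕ, mu (lam ^ k * c) ≤ K ^ k * mu c := by
      intro c hc k
      induction k with
      | zero => simp
      | succ n ih =>
        have hle1 : lam ^ n * c ≤ c := by
          nlinarith [pow_le_one₀ hq0.le hq1.le (n := n), hc.1]
        have hmem : lam ^ n * c ∈ Ioo (0:ℝ) c₁ :=
          ⟨mul_pos (hqk n) hc.1, lt_of_le_of_lt hle1 hc.2⟩
        have h1 := (hgood' hmem).1
        calc mu (lam ^ (n+1) * c) = mu (lam * (lam ^ n * c)) := by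
              rw [show lam ^ (n+1) * c = lam * (lam ^ n * c) by ring]
          _ ≤ K * mu (lam ^ n * c) := h1
          _ ≤ K * (K ^ n * mu c) := by nlinarith
          _ = K ^ (n+1) * mu c := by ring
    -- shared rewriting of the terms
    have hterm_eq : ∀ c : ℝ, 0 < c → ∀ k : ℕ,
        (lam ^ k * c) ^ p * (m (lam ^ (k+1) * c) - m (lam ^ k * c)) / (c ^ γ * ℒ c)
          = (lam ^ p) ^ k * ((m (lam ^ (k+1) * c) - m (lam ^ k * c)) * c ^ al / ℒ c) := by
      intro c hc0 k
      have h1 : (lam ^ k * c) ^ p = (lam ^ p) ^ k * c ^ p := by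
        rw [Real.mul_rpow (hqk k).le hc0.le, pow_rpow_comm hq0.le]
      have h2 : c ^ p = c ^ γ * c ^ al := by
        rw [← Real.rpow_add hc0]; congr 1; rw [hγdef]; ring
      have h3 : ℒ c ≠ 0 := ne_of_gt (hLpos c hc0)
      have h4 : c ^ γ ≠ 0 := ne_of_gt (Real.rpow_pos_of_pos hc0 γ)
      rw [h1, h2]
      field_simp
    -- the limit of U lam
    have hXlim : ∀ j : ℕ, Tendsto (fun c => m (lam ^ j * c) * c ^ al / ℒ c) (𝓝[>] (0:ℝ))
        (𝓝 (L * (lam ^ (-al)) ^ j)) := by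
      intro j
      have := tendsto_scale (hqk j) hLpos (hsv _ (hqk j)) hm
      rwa [pow_rpow_comm hq0.le] at this
    have htermlim : ∀ k : ℕ, Tendsto (fun c =>
        (lam ^ k * c) ^ p * (m (lam ^ (k+1) * c) - m (lam ^ k * c)) / (c ^ γ * ℒ c))
        (𝓝[>] (0:ℝ)) (𝓝 ((L * (lam ^ (-al) - 1)) * (lam ^ γ) ^ k)) := by
      intro k
      have h1 := (((hXlim (k+1)).sub (hXlim k)).const_mul ((lam ^ p) ^ k))
      have hval : (lam ^ p) ^ k * (L * (lam ^ (-al)) ^ (k+1) - L * (lam ^ (-al)) ^ k)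
          = (L * (lam ^ (-al) - 1)) * (lam ^ γ) ^ k := by
        have hcomb : lam ^ p * lam ^ (-al) = lam ^ γ := by
          rw [← Real.rpow_add hq0]; congr 1 <;> ring
        rw [← hcomb, mul_pow, pow_succ]
        ring
      rw [hval] at h1
      refine h1.congr' ?_
      filter_upwards [self_mem_nhdsWithin] with c hc0'
      rw [hterm_eq c hc0' k]
      ring
    have hUlim : Tendsto (U lam) (𝓝[>] (0:ℝ)) (𝓝 (L * ((lam ^ (-al) - 1) / (1 - lam ^ γ)))) := by
      have hbd : Summable (fun k : ℕ => (K * (2*Lu)) * (lam ^ (γ/2)) ^ k) :=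
        (summable_geometric_of_lt_one (Real.rpow_nonneg hq0.le _)
          (Real.rpow_lt_one hq0.le hq1 (by linarith))).mul_left _
      have hbound : ∀ᶠ c in 𝓝[>] (0:ℝ), ∀ k : ℕ,
          ‖(lam ^ k * c) ^ p * (m (lam ^ (k+1) * c) - m (lam ^ k * c)) / (c ^ γ * ℒ c)‖
            ≤ (K * (2*Lu)) * (lam ^ (γ/2)) ^ k := by
        filter_upwards [eventually_mem_set.mpr (Ioo_mem_nhdsGT hc₁0)] with c hc
        intro k
        obtain ⟨hK1, hmuc, h2Lu⟩ := hgood' hc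
        have hc0 : (0:ℝ) < c := hc.1
        have hxal : (0:ℝ) < c ^ al := Real.rpow_pos_of_pos hc0 al
        have hLc : (0:ℝ) < ℒ c := hLpos c hc0
        have hΔnn : 0 ≤ m (lam ^ (k+1) * c) - m (lam ^ k * c) := by
          linarith [hmanti (mul_pos (hqk (k+1)) hc0) (hdec k c hc0)]
        have htnn : 0 ≤ (lam ^ p) ^ k := by positivity
        rw [hterm_eq c hc0 k, Real.norm_eq_abs, abs_of_nonneg (by positivity)]
        have hch1 : (m (lam ^ (k+1) * c) - m (lam ^ k * c)) * c ^ al / ℒ c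
            ≤ (K ^ (k+1) * mu c) * c ^ al / ℒ c := by
          have s1 : m (lam ^ (k+1) * c) - m (lam ^ k * c) ≤ m (lam ^ (k+1) * c) := by
            linarith [hmnn (lam ^ k * c)]
          have s2 : m (lam ^ (k+1) * c) ≤ mu (lam ^ (k+1) * c) :=
            hmmu (mul_pos (hqk (k+1)) hc0)
          have s3 := hPot c hc (k+1)
          gcongr
          linarith
        calc (lam ^ p) ^ k * ((m (lam ^ (k+1) * c) - m (lam ^ k * c)) * c ^ al / ℒ c)
            ≤ (lam ^ p) ^ k * ((K ^ (k+1) * mu c) * c ^ al / ℒ c) := by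
              apply mul_le_mul_of_nonneg_left hch1 htnn
          _ = ((lam ^ p) ^ k * K ^ k) * K * (mu c * c ^ al / ℒ c) := by ring
          _ ≤ ((lam ^ p) ^ k * K ^ k) * K * (2*Lu) := by
              have : (0:ℝ) ≤ ((lam ^ p) ^ k * K ^ k) * K := by positivity
              exact mul_le_mul_of_nonneg_left h2Lu this
          _ = (K * (2*Lu)) * (lam ^ p * K) ^ k := by rw [mul_pow]; ring
          _ = (K * (2*Lu)) * (lam ^ (γ/2)) ^ k := by rw [hqeq]
      have hT := tendsto_tsum_of_dominated_convergence (𝓕 := 𝓝[>] (0:ℝ)) hbd htermlim hbound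
      have hsum : ∑' k : ℕ, (L * (lam ^ (-al) - 1)) * (lam ^ γ) ^ k
          = L * ((lam ^ (-al) - 1) / (1 - lam ^ γ)) := by
        rw [tsum_mul_left, tsum_geometric_of_lt_one (Real.rpow_nonneg hq0.le γ)
          (Real.rpow_lt_one hq0.le hq1 hγ0)]
        rw [div_eq_mul_inv]; ring
      rw [hsum] at hT
      exact hT
    refine ⟨?_, hUlim.const_mul (lam ^ p), hUlim⟩
    -- the sandwich
    filter_upwards [eventually_mem_set.mpr (Ioo_mem_nhdsGT hc₁0)] with c hc
    have hc0 : (0:ℝ) < c := hc.1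
    have hden : 0 < c ^ γ * ℒ c := mul_pos (Real.rpow_pos_of_pos hc0 γ) (hLpos c hc0)
    set Bl : ℕ → Set Ω := fun k => {ω | lam ^ (k+1) * c ≤ nrm ω ∧ nrm ω < lam ^ k * c} with hBldef
    have hBmeas : ∀ k, MeasurableSet (Bl k) := fun k => hnrm measurableSet_Ico
    have hBdisj : Pairwise (Function.onFun Disjoint Bl) := by
      have key : ∀ {i j : ℕ}, i < j → Disjoint (Bl i) (Bl j) := by
        intro i j hij
        rw [Set.disjoint_left]
        rintro ω ⟨hω1, hω2⟩ ⟨hω3, hω4⟩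
        have h5 : lam ^ j ≤ lam ^ (i+1) := pow_le_pow_of_le_one hq0.le hq1.le hij
        nlinarith [hc0]
      intro i j hij
      rcases hij.lt_or_gt with h | h
      · exact key h
      · exact (key h).symm
    have hBunion : (⋃ k, Bl k) = {ω | 0 < nrm ω ∧ nrm ω < c} := by
      ext ω
      simp only [mem_iUnion, hBldef, mem_setOf_eq]
      constructor
      · rintro ⟨k, h1, h2⟩
        refine ⟨lt_of_lt_of_le (mul_pos (hqk (k+1)) hc0) h1, lt_of_lt_of_le h2 ?_⟩
        nlinarith [pow_le_one₀ hq0.le hq1.le (n := k), hc0]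
      · rintro ⟨h1, h2⟩
        have hex : ∃ n : ℕ, lam ^ (n+1) * c ≤ nrm ω := by
          have htend : Tendsto (fun n : ℕ => lam ^ n * c) atTop (𝓝 (0 * c)) :=
            (tendsto_pow_atTop_nhds_zero_of_lt_one hq0.le hq1).mul_const c
          rw [zero_mul] at htend
          obtain ⟨n, hn⟩ := (htend.eventually (eventually_lt_nhds h1)).exists
          exact ⟨n, le_of_lt (lt_of_le_of_lt (hdec n c hc0) hn)⟩
        classical
        refine ⟨Nat.find hex, Nat.find_spec hex, ?_⟩
        by_cases hk : Nat.find hex = 0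
        · rw [hk]; simpa using h2
        · obtain ⟨j, hj⟩ := Nat.exists_eq_succ_of_ne_zero hk
          have hmin := Nat.find_min hex (by omega : j < Nat.find hex)
          rw [hj]
          exact not_le.mp hmin
    have hμBfin : ∀ k, μ (Bl k) ≠ ⊤ := fun k =>
      (lt_of_le_of_lt (measure_mono (fun ω hω => hω.1)) (hfin' _ (mul_pos (hqk (k+1)) hc0))).ne
    have hμBtoReal : ∀ k, (μ (Bl k)).toReal = m (lam ^ (k+1) * c) - m (lam ^ k * c) := by
      intro k
      have hset : Bl k = {ω | lam ^ (k+1) * c ≤ nrm ω} \ {ω | lam ^ k * c ≤ nrm ω} := by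
        ext ω; simp [hBldef, mem_diff, not_le, and_comm]
      have hss : {ω | lam ^ k * c ≤ nrm ω} ⊆ {ω | lam ^ (k+1) * c ≤ nrm ω} :=
        hsub (hdec k c hc0)
      rw [hset, measure_diff hss (hnrm measurableSet_Ici).nullMeasurableSet
          (hfin' _ (mul_pos (hqk k) hc0)).ne,
        ENNReal.toReal_sub_of_le (measure_mono hss) (hfin' _ (mul_pos (hqk (k+1)) hc0)).ne]
    set J : ℝ≥0∞ := ∫⁻ ω in {ω | 0 < nrm ω ∧ nrm ω < c}, ENNReal.ofReal (nrm ω ^ p) ∂μ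
      with hJdef
    have hJsum : J = ∑' k, ∫⁻ ω in Bl k, ENNReal.ofReal (nrm ω ^ p) ∂μ := by
      rw [hJdef, ← hBunion, lintegral_iUnion hBmeas hBdisj]
    set V : ℝ≥0∞ := ∑' k, ENNReal.ofReal ((lam ^ k * c) ^ p) * μ (Bl k) with hVdef
    have hJV : J ≤ V := by
      rw [hJsum]
      refine ENNReal.tsum_le_tsum fun k => ?_
      calc ∫⁻ ω in Bl k, ENNReal.ofReal (nrm ω ^ p) ∂μ
          ≤ ∫⁻ _ω in Bl k, ENNReal.ofReal ((lam ^ k * c) ^ p) ∂μ := by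
            refine setLIntegral_mono' (hBmeas k) fun ω hω => ?_
            refine ENNReal.ofReal_le_ofReal (Real.rpow_le_rpow ?_ hω.2.le hp0.le)
            exact le_trans (mul_pos (hqk (k+1)) hc0).le hω.1
        _ = ENNReal.ofReal ((lam ^ k * c) ^ p) * μ (Bl k) := setLIntegral_const _ _
    have hVJ : ENNReal.ofReal (lam ^ p) * V ≤ J := by
      rw [hJsum, hVdef, ← ENNReal.tsum_mul_left]
      refine ENNReal.tsum_le_tsum fun k => ?_
      have heq : ENNReal.ofReal (lam ^ p) * (ENNReal.ofReal ((lam ^ k * c) ^ p) * μ (Bl k))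
          = ENNReal.ofReal ((lam ^ (k+1) * c) ^ p) * μ (Bl k) := by
        rw [← mul_assoc, ← ENNReal.ofReal_mul (Real.rpow_nonneg hq0.le p)]
        congr 2
        rw [show lam ^ (k+1) * c = lam * (lam ^ k * c) by ring,
          Real.mul_rpow hq0.le (mul_pos (hqk k) hc0).le]
      rw [heq]
      calc ENNReal.ofReal ((lam ^ (k+1) * c) ^ p) * μ (Bl k)
          = ∫⁻ _ω in Bl k, ENNReal.ofReal ((lam ^ (k+1) * c) ^ p) ∂μ :=
            (setLIntegral_const _ _).symm
        _ ≤ ∫⁻ ω in Bl k, ENNReal.ofReal (nrm ω ^ p) ∂μ :=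
            setLIntegral_mono' (hBmeas k) fun ω hω =>
              ENNReal.ofReal_le_ofReal (Real.rpow_le_rpow (mul_pos (hqk (k+1)) hc0).le hω.1 hp0.le)
    obtain ⟨hK1, hmuc, h2Lu⟩ := hgood' hc
    have hwsum : Summable (fun k : ℕ => (lam ^ k * c) ^ p * (K ^ (k+1) * mu c)) := by
      have heqw : ∀ k : ℕ, (c ^ p * K * mu c) * (lam ^ p * K) ^ k
          = (lam ^ k * c) ^ p * (K ^ (k+1) * mu c) := by
        intro k
        rw [Real.mul_rpow (hqk k).le hc0.le, pow_rpow_comm hq0.le, pow_succ, mul_pow]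
        ring
      exact ((summable_geometric_of_lt_one hqnn hqlt).mul_left (c ^ p * K * mu c)).congr heqw
    have hVfin : V ≠ ⊤ := by
      have hub : ∀ k, ENNReal.ofReal ((lam ^ k * c) ^ p) * μ (Bl k)
          ≤ ENNReal.ofReal ((lam ^ k * c) ^ p * (K ^ (k+1) * mu c)) := by
        intro k
        have h1 : μ (Bl k) ≤ ENNReal.ofReal (mu (lam ^ (k+1) * c)) := by
          calc μ (Bl k) ≤ μu {ω | lam ^ (k+1) * c ≤ nrm ω} :=
                le_trans (measure_mono fun ω hω => hω.1) (hle _)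
            _ = ENNReal.ofReal (mu (lam ^ (k+1) * c)) :=
                (ENNReal.ofReal_toReal (hfin _ (mul_pos (hqk (k+1)) hc0)).ne).symm
        calc ENNReal.ofReal ((lam ^ k * c) ^ p) * μ (Bl k)
            ≤ ENNReal.ofReal ((lam ^ k * c) ^ p) * ENNReal.ofReal (mu (lam ^ (k+1) * c)) :=
              mul_le_mul_right h1 _
          _ = ENNReal.ofReal ((lam ^ k * c) ^ p * mu (lam ^ (k+1) * c)) :=
              (ENNReal.ofReal_mul (Real.rpow_nonneg (mul_pos (hqk k) hc0).le p)).symm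
          _ ≤ ENNReal.ofReal ((lam ^ k * c) ^ p * (K ^ (k+1) * mu c)) := by
              refine ENNReal.ofReal_le_ofReal ?_
              have := hPot c hc (k+1)
              nlinarith [Real.rpow_nonneg (mul_pos (hqk k) hc0).le p]
      have hV2 : V ≤ ENNReal.ofReal (∑' k, (lam ^ k * c) ^ p * (K ^ (k+1) * mu c)) := by
        rw [ENNReal.ofReal_tsum_of_nonneg (fun k => mul_nonneg
          (Real.rpow_nonneg (mul_pos (hqk k) hc0).le p)
          (mul_nonneg (pow_nonneg hK0.le _) hmuc.le)) hwsum]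
        exact ENNReal.tsum_le_tsum hub
      exact (lt_of_le_of_lt hV2 ENNReal.ofReal_lt_top).ne
    have hJfin : J ≠ ⊤ := (lt_of_le_of_lt hJV hVfin.lt_top).ne
    have hVtoReal : V.toReal
        = ∑' k, (lam ^ k * c) ^ p * (m (lam ^ (k+1) * c) - m (lam ^ k * c)) := by
      rw [hVdef, ENNReal.tsum_toReal_eq
        (fun k => ENNReal.mul_ne_top ENNReal.ofReal_ne_top (hμBfin k))]
      exact tsum_congr fun k => by
        rw [ENNReal.toReal_mul,
          ENNReal.toReal_ofReal (Real.rpow_nonneg (mul_pos (hqk k) hc0).le p), hμBtoReal k]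
    have hUVal : U lam c = V.toReal / (c ^ γ * ℒ c) := by
      simp only [hUdef]
      rw [tsum_div_const, hVtoReal]
    constructor
    · rw [hUVal]
      have h1 : lam ^ p * V.toReal ≤ J.toReal := by
        have h2 := ENNReal.toReal_mono hJfin hVJ
        rwa [ENNReal.toReal_mul, ENNReal.toReal_ofReal (Real.rpow_nonneg hq0.le p)] at h2
      calc lam ^ p * (V.toReal / (c ^ γ * ℒ c)) = (lam ^ p * V.toReal) / (c ^ γ * ℒ c) := by
            ring
        _ ≤ J.toReal / (c ^ γ * ℒ c) := by
            exact div_le_div_of_nonneg_right h1 hden.le |>.trans_eq rfl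
    · rw [hUVal]
      exact div_le_div_of_nonneg_right (ENNReal.toReal_mono hVfin hJV) hden.le
  · -- A-limit
    have h1 : Tendsto (fun lam : ℝ => lam ^ p) (𝓝[<] (1:ℝ)) (𝓝 (1:ℝ)) := by
      have hc : ContinuousAt (fun x : ℝ => x ^ p) 1 :=
        Real.continuousAt_rpow_const 1 p (Or.inl one_ne_zero)
      have h2 : Tendsto (fun x : ℝ => x ^ p) (𝓝[<] (1:ℝ)) (𝓝 ((1:ℝ) ^ p)) :=
        hc.tendsto.mono_left (nhdsWithin_le_nhds (s := Iio (1:ℝ)))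
      simpa using h2
    have := h1.mul (tendsto_Bv (L := L) hal hγ0)
    simpa using this
  · exact tendsto_Bv hal hγ0

end

lemma measurable_sphInv {d : ℕ} : Measurable (sphInv (d := d)) := by
  unfold sphInv
  exact ((measurable_norm.pow_const 2).inv).smul measurable_id

lemma coneEq {d : ℕ} (D' : Set (Metric.sphere (0 : Rd d) 1)) (t : ℝ) :
    cone D' t = {x : Rd d | t < ‖x‖} ∩
      ((fun x : Rd d => ‖x‖⁻¹ • x) ⁻¹' (Subtype.val '' D')) := by
  ext x
  simp only [cone, mem_inter_iff, mem_setOf_eq, mem_preimage]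
  constructor
  · rintro ⟨h1, h2, h3⟩
    exact ⟨h1, ⟨_, h3, rfl⟩⟩
  · rintro ⟨h1, y, hy, hyx⟩
    have hmem : ‖x‖⁻¹ • x ∈ Metric.sphere (0 : Rd d) 1 := by rw [← hyx]; exact y.2
    refine ⟨h1, hmem, ?_⟩
    have hxy : (⟨‖x‖⁻¹ • x, hmem⟩ : Metric.sphere (0 : Rd d) 1) = y := Subtype.ext hyx.symm
    rw [hxy]; exact hy

theorem stmt7 {d : ℕ} (β ρ : ℝ) (hβ : β ∈ Set.Icc (0 : ℝ) 2)
    (hρ : ρ ∈ Set.Ioo (-(2 + β)) 0)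
    (M : Measure (Rd d)) (hM : MemM β M)
    (σ : Measure (Metric.sphere (0 : Rd d) 1)) [IsFiniteMeasure σ] (hσ : σ ≠ 0)
    (ℓ : ℝ → ℝ) (hℓpos : ∀ t : ℝ, 0 < t → 0 < ℓ t)
    (hℓ : ∀ x : ℝ, 0 < x → Tendsto (fun t => ℓ (t * x) / ℓ t) atTop (𝓝 1))
    (hyp : ∀ D : Set (Metric.sphere (0 : Rd d) 1), MeasurableSet D → σ (frontier D) = 0 →
      Tendsto (fun t : ℝ => (M (cone D t)).toReal / (t ^ (-(ρ + 2 + β)) * ℓ (1 / t)))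
        (𝓝[>] 0) (𝓝 (σ D).toReal)) :
    ∀ D : Set (Metric.sphere (0 : Rd d) 1), MeasurableSet D → σ (frontier D) = 0 →
      Tendsto (fun t : ℝ => (betaInv β M (cone D t)).toReal / (t ^ ρ * ℓ t))
        atTop (𝓝 ((ρ + 2 + β) / |ρ| * (σ D).toReal)) := by
  obtain ⟨hβ0, hβ2⟩ := hβ
  obtain ⟨hρl, hρu⟩ := hρ
  intro D hD hfr
  set p : ℝ := 2 + β with hpdef
  set al : ℝ := ρ + 2 + β with haldef
  have hal0 : 0 < al := by rw [haldef]; linarith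
  have halp : al < p := by rw [haldef, hpdef]; linarith
  set ℒ : ℝ → ℝ := fun s => ℓ s⁻¹ with hℒdef
  have hLpos : ∀ s : ℝ, 0 < s → 0 < ℒ s := fun s hs => hℓpos _ (inv_pos.mpr hs)
  have hsv : ∀ a : ℝ, 0 < a → Tendsto (fun c => ℒ (a * c) / ℒ c) (𝓝[>] (0:ℝ)) (𝓝 1) := by
    intro a ha
    have h1 := (hℓ a⁻¹ (inv_pos.mpr ha)).comp tendsto_inv_nhdsGT_zero
    refine h1.congr' ?_
    filter_upwards [self_mem_nhdsWithin] with c _hc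
    simp only [Function.comp, hℒdef]
    rw [mul_inv, mul_comm (a⁻¹) (c⁻¹)]
  -- finiteness from MemM
  have Mfin : ∀ s : ℝ, 0 < s → M {x : Rd d | s ≤ ‖x‖} < ⊤ := by
    intro s hs
    set ε : ℝ := min ((min s 1) ^ (2:ℝ)) ((min s 1) ^ β) with hεdef
    have hs1 : 0 < min s 1 := lt_min hs one_pos
    have hε : 0 < ε := lt_min (Real.rpow_pos_of_pos hs1 _) (Real.rpow_pos_of_pos hs1 _)
    have hεne : ENNReal.ofReal ε ≠ 0 := by
      simp only [ne_eq, ENNReal.ofReal_eq_zero, not_le]; exact hε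
    have hsubset : {x : Rd d | s ≤ ‖x‖} ⊆
        {x : Rd d | ENNReal.ofReal ε ≤ ENNReal.ofReal (min (‖x‖ ^ (2:ℝ)) (‖x‖ ^ β))} := by
      intro x hx
      simp only [mem_setOf_eq] at hx ⊢
      apply ENNReal.ofReal_le_ofReal
      have hx1 : min s 1 ≤ ‖x‖ := le_trans (min_le_left _ _) hx
      have h2 : (min s 1) ^ (2:ℝ) ≤ ‖x‖ ^ (2:ℝ) := Real.rpow_le_rpow hs1.le hx1 (by norm_num)
      have h3 : (min s 1) ^ β ≤ ‖x‖ ^ β := Real.rpow_le_rpow hs1.le hx1 hβ0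
      exact le_min ((min_le_left _ _).trans h2) ((min_le_right _ _).trans h3)
    have hmeas : Measurable fun x : Rd d =>
        ENNReal.ofReal (min (‖x‖ ^ (2:ℝ)) (‖x‖ ^ β)) := by fun_prop
    calc M {x : Rd d | s ≤ ‖x‖}
        ≤ M {x : Rd d | ENNReal.ofReal ε ≤ ENNReal.ofReal (min (‖x‖ ^ (2:ℝ)) (‖x‖ ^ β))} :=
          measure_mono hsubset
      _ ≤ (∫⁻ x, ENNReal.ofReal (min (‖x‖ ^ (2:ℝ)) (‖x‖ ^ β)) ∂M) / ENNReal.ofReal ε :=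
          meas_ge_le_lintegral_div hmeas.aemeasurable hεne ENNReal.ofReal_ne_top
      _ < ⊤ := ENNReal.div_lt_top hM.2.ne hεne
  -- direction sets
  set Dir : Set (Rd d) := (fun x : Rd d => ‖x‖⁻¹ • x) ⁻¹' (Subtype.val '' D) with hDirdef
  set DirU : Set (Rd d) := (fun x : Rd d => ‖x‖⁻¹ • x) ⁻¹'
    (Subtype.val '' (univ : Set (Metric.sphere (0 : Rd d) 1))) with hDirUdef
  have hdirmeas : Measurable (fun x : Rd d => ‖x‖⁻¹ • x) :=
    (measurable_norm.inv).smul measurable_id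
  have hsphere : MeasurableSet (Metric.sphere (0 : Rd d) 1 : Set (Rd d)) :=
    Metric.isClosed_sphere.measurableSet
  have hDirMeas : MeasurableSet Dir := hdirmeas (hsphere.subtype_image hD)
  have hnormMeas : ∀ s : ℝ, MeasurableSet {x : Rd d | s ≤ ‖x‖} :=
    fun s => measurable_norm measurableSet_Ici
  -- the Ici-version limits
  have hmD : ∀ (D' : Set (Metric.sphere (0 : Rd d) 1)), MeasurableSet D' → σ (frontier D') = 0 →
      Tendsto (fun s : ℝ => ((M.restrict ((fun x : Rd d => ‖x‖⁻¹ • x) ⁻¹' (Subtype.val '' D')))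
        {x : Rd d | s ≤ ‖x‖}).toReal * s ^ al / ℒ s) (𝓝[>] (0:ℝ)) (𝓝 (σ D').toReal) := by
    intro D' hD' hfr'
    have hφ : Tendsto (fun s : ℝ => (M (cone D' s)).toReal * s ^ al / ℒ s) (𝓝[>] (0:ℝ))
        (𝓝 (σ D').toReal) := by
      refine (hyp D' hD' hfr').congr' ?_
      filter_upwards [self_mem_nhdsWithin] with t ht
      have ht0 : (0:ℝ) < t := ht
      have h1 : t ^ (-(ρ + 2 + β)) = (t ^ al)⁻¹ := by
        rw [show -(ρ + 2 + β) = -al by rw [haldef], Real.rpow_neg ht0.le]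
      have h2 : t ^ al ≠ 0 := ne_of_gt (Real.rpow_pos_of_pos ht0 al)
      have h3 : ℓ t⁻¹ ≠ 0 := ne_of_gt (hℓpos _ (inv_pos.mpr ht0))
      rw [h1, one_div]
      simp only [hℒdef]
      field_simp
    have hconefin : ∀ s : ℝ, 0 < s → M (cone D' s) < ⊤ := by
      intro s hs
      refine lt_of_le_of_lt (measure_mono ?_) (Mfin s hs)
      rw [coneEq]
      exact fun x hx => show s ≤ ‖x‖ from le_of_lt hx.1
    have hrfin : ∀ s : ℝ, 0 < s →
        (M.restrict ((fun x : Rd d => ‖x‖⁻¹ • x) ⁻¹' (Subtype.val '' D'))) {x : Rd d | s ≤ ‖x‖} < ⊤ := by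
      intro s hs
      rw [Measure.restrict_apply (hnormMeas s)]
      exact lt_of_le_of_lt (measure_mono inter_subset_left) (Mfin s hs)
    apply squeeze_param (g := fun _lam s => (M (cone D' s)).toReal * s ^ al / ℒ s)
      (h := fun lam s => (M (cone D' (lam * s))).toReal * s ^ al / ℒ s)
      (A := fun _ => (σ D').toReal) (B := fun lam => (σ D').toReal * lam ^ (-al))
    · intro lam hlam
      refine ⟨?_, hφ, tendsto_scale hlam.1 hLpos (hsv lam hlam.1) hφ⟩
      filter_upwards [self_mem_nhdsWithin] with s hs
      have hs0 : (0:ℝ) < s := hs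
      have hsnn : (0:ℝ) ≤ s ^ al := Real.rpow_nonneg hs0.le al
      constructor
      · refine div_le_div_of_nonneg_right (mul_le_mul_of_nonneg_right ?_ hsnn) (hLpos s hs0).le
        rw [Measure.restrict_apply (hnormMeas s)]
        refine ENNReal.toReal_mono (lt_of_le_of_lt (measure_mono inter_subset_left) (Mfin s hs0)).ne ?_
        rw [coneEq]
        exact measure_mono (inter_subset_inter_left _
          (fun (x : Rd d) hx => show s ≤ ‖x‖ from le_of_lt hx))
      · refine div_le_div_of_nonneg_right (mul_le_mul_of_nonneg_right ?_ hsnn) (hLpos s hs0).le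
        rw [Measure.restrict_apply (hnormMeas s)]
        refine ENNReal.toReal_mono (hconefin _ (mul_pos hlam.1 hs0)).ne ?_
        rw [coneEq]
        have hls : lam * s < s := by nlinarith [hlam.1, hlam.2]
        exact measure_mono (inter_subset_inter_left _
          (fun (x : Rd d) hx => show lam * s < ‖x‖ from lt_of_lt_of_le hls hx))
    · exact tendsto_const_nhds
    · have h1 : Tendsto (fun lam : ℝ => lam ^ (-al)) (𝓝[<] (1:ℝ)) (𝓝 ((1:ℝ) ^ (-al))) :=
        (Real.continuousAt_rpow_const 1 (-al) (Or.inl one_ne_zero)).tendsto.mono_left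
          (nhdsWithin_le_nhds (s := Iio (1:ℝ)))
      have h2 := tendsto_const_nhds (x := (σ D').toReal) (f := 𝓝[<] (1:ℝ)) |>.mul h1
      simpa using h2
  -- apply the core lemma
  have hLuPos : 0 < (σ univ).toReal := by
    refine ENNReal.toReal_pos ?_ (measure_ne_top σ _)
    simpa [Measure.measure_univ_eq_zero] using hσ
  have hDirSub : Dir ⊆ DirU := preimage_mono (image_mono (subset_univ _))
  have hfinR : ∀ s : ℝ, 0 < s → (M.restrict DirU) {x : Rd d | s ≤ ‖x‖} < ⊤ := by
    intro s hs
    rw [Measure.restrict_apply (hnormMeas s)]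
    exact lt_of_le_of_lt (measure_mono inter_subset_left) (Mfin s hs)
  have hcore := core (M.restrict Dir) (M.restrict DirU) (fun x : Rd d => ‖x‖) measurable_norm
    ℒ hLpos hsv p al ((σ D).toReal) ((σ univ).toReal) hal0 halp hLuPos
    (Measure.restrict_mono hDirSub le_rfl) hfinR (hmD D hD hfr)
    (hmD univ MeasurableSet.univ (by simp))
  have hcomp := hcore.comp tendsto_inv_atTop_nhdsGT_zero
  have hconst : (σ D).toReal * (al / (p - al)) = (ρ + 2 + β) / |ρ| * (σ D).toReal := by
    rw [abs_of_neg hρu, haldef, hpdef]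
    ring_nf
  rw [hconst] at hcomp
  refine hcomp.congr' ?_
  filter_upwards [eventually_gt_atTop (0:ℝ)] with t ht
  have hAmeas : MeasurableSet {x : Rd d | 0 < ‖x‖ ∧ ‖x‖ < t⁻¹} :=
    measurable_norm measurableSet_Ioo
  have hconemeas : MeasurableSet (cone D t) := by
    rw [coneEq]
    exact (measurable_norm measurableSet_Ioi).inter hDirMeas
  have hpre : sphInv ⁻¹' (cone D t) = {x : Rd d | 0 < ‖x‖ ∧ ‖x‖ < t⁻¹} ∩ Dir := by
    rw [coneEq]
    ext x
    rcases eq_or_ne x 0 with rfl | hx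
    · have h0 : sphInv (0 : Rd d) = 0 := by simp [sphInv]
      simp [h0, mem_preimage, ht, le_of_lt ht, not_lt.mpr ht.le]
    · have hnx : 0 < ‖x‖ := norm_pos_iff.mpr hx
      have hnorm : ‖sphInv x‖ = ‖x‖⁻¹ := by
        rw [show sphInv x = (‖x‖^2)⁻¹ • x from rfl, norm_smul, norm_inv, norm_pow, norm_norm, sq]
        field_simp
      have hdirEq : ‖x‖ • sphInv x = ‖x‖⁻¹ • x := by
        rw [show sphInv x = (‖x‖^2)⁻¹ • x from rfl, smul_smul, sq]
        congr 1
        field_simp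
      simp only [hDirdef, mem_preimage, mem_inter_iff, mem_setOf_eq, hnorm, inv_inv, hdirEq]
      constructor
      · rintro ⟨h1, h2⟩
        exact ⟨⟨hnx, (lt_inv_comm₀ ht hnx).mp h1⟩, h2⟩
      · rintro ⟨⟨_, h1⟩, h2⟩
        exact ⟨(lt_inv_comm₀ ht hnx).mpr h1, h2⟩
  have hnum : betaInv β M (cone D t)
      = ∫⁻ x in {x : Rd d | 0 < ‖x‖ ∧ ‖x‖ < t⁻¹}, ENNReal.ofReal (‖x‖ ^ p) ∂(M.restrict Dir) := by
    rw [betaInv, Measure.map_apply measurable_sphInv hconemeas,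
      withDensity_apply _ (measurable_sphInv hconemeas), hpre,
      ← Measure.restrict_restrict hAmeas]
  have hdeneq : (t⁻¹) ^ (p - al) * ℒ (t⁻¹) = t ^ ρ * ℓ t := by
    have h1 : ℒ t⁻¹ = ℓ t := by simp only [hℒdef]; rw [inv_inv]
    have h2 : (t⁻¹) ^ (p - al) = t ^ ρ := by
      rw [Real.inv_rpow ht.le, ← Real.rpow_neg ht.le]
      congr 1
      rw [hpdef, haldef]; ring
    rw [h1, h2]
  show (∫⁻ x in {x : Rd d | 0 < ‖x‖ ∧ ‖x‖ < t⁻¹}, ENNReal.ofReal (‖x‖ ^ p)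
      ∂(M.restrict Dir)).toReal / ((t⁻¹) ^ (p - al) * ℒ (t⁻¹))
    = (betaInv β M (cone D t)).toReal / (t ^ ρ * ℓ t)
  rw [hnum, hdeneq]
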